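/- arXiv:2007.15623 — 2 statements merged into one kernel-verified Lean document; each statement's English description precedes it below -/
import Mathlib

section
/- For every L ≥ 0 and every set S of N points in [−1,1]^d, the hypothesis class H^L given by the closed unit ball of W^L([−1,1]^d) satisfies the Rademacher complexity bound Rad(H^L; S) ≤ 2^L √(2 log(2d+2) / N). -/
open MeasureTheory Set Filter Topology
open scoped ENNReal NNReal Classical

noncomputable section

/-- The rectified linear unit. -/
def relu (z : ℝ) : ℝ := max z 0

/-- The Borel σ-algebra on `C(K, ℝ)` for the topology of uniform convergence
(= compact-open topology for compact `K`). -/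
instance ctsMeasurableSpace {d : ℕ} (K : Set (Fin d → ℝ)) : MeasurableSpace C(K, ℝ) := borel _

/-- `(μp, μn)` is a (Jordan-decomposed) signed-measure representation of `f` over the
class `H ⊆ C(K, ℝ)`: both parts are finite measures concentrated on `H`, and
`f x = ∫ relu (g x) dμp - ∫ relu (g x) dμn` for every `x ∈ K`. -/
def IsBarronRep {d : ℕ} (K : Set (Fin d → ℝ)) (H : Set C(K, ℝ)) (f : C(K, ℝ))
    (μp μn : Measure C(K, ℝ)) : Prop :=
  IsFiniteMeasure μp ∧ IsFiniteMeasure μn ∧ μp Hᶜ = 0 ∧ μn Hᶜ = 0 ∧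
    ∀ x : K, f x = (∫ g : C(K, ℝ), relu (g x) ∂μp) - ∫ g : C(K, ℝ), relu (g x) ∂μn

/-- The generalized Barron norm `‖f‖_{X,K}`, where `H` plays the role of the closed unit
ball `B^X` (realized inside `C(K,ℝ)`): the infimum of the total variation mass over all
signed-measure representations of `f`. -/
def barronNorm {d : ℕ} (K : Set (Fin d → ℝ)) (H : Set C(K, ℝ)) (f : C(K, ℝ)) : ℝ≥0∞ :=
  ⨅ p : {p : Measure C(K, ℝ) × Measure C(K, ℝ) // IsBarronRep K H f p.1 p.2},
    p.1.1 Set.univ + p.1.2 Set.univ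

/-- The neural tree norm `‖·‖_{W^L(K)}`. For `L = 0` it is the norm `‖w‖_{ℓ¹} + |b|` of the
space of affine functions `x ↦ wᵀx + b`; for `L ≥ 1`, `W^L(K) = B_{W^{L-1}(K), K}` is the
generalized Barron space modelled on `X = W^{L-1}(K)`, whose unit ball is
`{g : treeNorm K (L-1) g ≤ 1}`.  A continuous function `f` belongs to `W^L(K)` iff
`treeNorm K L f ≠ ∞`. -/
def treeNorm {d : ℕ} (K : Set (Fin d → ℝ)) : ℕ → C(K, ℝ) → ℝ≥0∞
  | 0, f =>
    ⨅ p : {p : (Fin d → ℝ) × ℝ //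
        ∀ x : K, f x = (∑ i : Fin d, p.1 i * (x : Fin d → ℝ) i) + p.2},
      ENNReal.ofReal ((∑ i : Fin d, |p.1.1 i|) + |p.1.2|)
  | (L + 1), f => barronNorm K {g : C(K, ℝ) | treeNorm K L g ≤ 1} f

/-- The Rademacher complexity `Rad(H; S) = E_ξ [ sup_{h ∈ H} (1/N) Σᵢ ξᵢ h(xᵢ) ]`
of a class `H` of real-valued functions on a sample `S = (x_1, …, x_N)`, where the `ξᵢ`
are i.i.d. uniform random signs (the expectation is the average over all `2^N` sign
patterns); valued in `EReal` to handle unbounded classes. -/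
def rademacher {α : Type*} {N : ℕ} (H : Set (α → ℝ)) (S : Fin N → α) : EReal :=
  (((2 ^ N : ℝ)⁻¹ : ℝ) : EReal) *
    ∑ ξ : Fin N → Bool,
      ⨆ h ∈ H, ((((N : ℝ))⁻¹ * ∑ i : Fin N, (if ξ i then (1 : ℝ) else -1) * h (S i) : ℝ) : EReal)

/-- The cube `[-1,1]^d ⊆ ℝ^d`. -/
def cube (d : ℕ) : Set (Fin d → ℝ) := {x | ∀ i, |x i| ≤ 1}

end

noncomputable section
namespace Rad14
open Real

/-! ### relu basics -/

lemma relu_nonneg (z : ℝ) : 0 ≤ relu z := le_max_right _ _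
lemma relu_le_abs (z : ℝ) : relu z ≤ |z| := max_le (le_abs_self z) (abs_nonneg z)
lemma abs_relu_le_abs (z : ℝ) : |relu z| ≤ |z| := by
  rw [abs_of_nonneg (relu_nonneg z)]; exact relu_le_abs z
lemma relu_zero : relu 0 = 0 := by simp [relu]
lemma relu_lip (a b : ℝ) : |relu a - relu b| ≤ |a - b| := abs_max_sub_max_le_abs a b 0

/-! ### measure-theoretic helpers on `C(K, ℝ)` -/

instance {d : ℕ} (K : Set (Fin d → ℝ)) : BorelSpace C(K, ℝ) := ⟨rfl⟩

lemma continuous_reluEval {d : ℕ} {K : Set (Fin d → ℝ)} (x : K) :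
    Continuous fun g : C(K, ℝ) => relu (g x) := by
  have h1 : Continuous fun g : C(K, ℝ) => g x := continuous_eval_const x
  exact (continuous_id.max continuous_const).comp h1

lemma integrable_of_bound {d : ℕ} {K : Set (Fin d → ℝ)} (μ : Measure C(K, ℝ))
    [IsFiniteMeasure μ] {φ : C(K, ℝ) → ℝ} (hc : Continuous φ) {c : ℝ}
    (hb : ∀ᵐ g ∂μ, |φ g| ≤ c) : Integrable φ μ :=
  ⟨hc.aestronglyMeasurable, HasFiniteIntegral.of_bounded (C := c)
    (by simpa [Real.norm_eq_abs] using hb)⟩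

/-! ### a small real-analysis helper -/

lemma le_of_forall_one_add_mul {A B : ℝ} (hB : 0 ≤ B)
    (h : ∀ δ : ℝ, 0 < δ → A ≤ (1 + δ) * B) : A ≤ B := by
  by_contra hc
  push_neg at hc
  have hB1 : (0:ℝ) < B + 1 := by linarith
  have hδ : 0 < (A - B) / (B + 1) := div_pos (by linarith) hB1
  have h2 := h _ hδ
  have hq : (A - B) / (B + 1) * (B + 1) = A - B := div_mul_cancel₀ _ (ne_of_gt hB1)
  nlinarith [hq, h2]

/-! ### basic properties of the tree norm -/

lemma treeNorm_zero_rep {d : ℕ} {K : Set (Fin d → ℝ)} {f : C(K, ℝ)}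
    (h : treeNorm K 0 f ≤ 1) {δ : ℝ} (hδ : 0 < δ) :
    ∃ w : Fin d → ℝ, ∃ b : ℝ,
      (∀ x : K, f x = (∑ i : Fin d, w i * (x : Fin d → ℝ) i) + b) ∧
      (∑ i : Fin d, |w i|) + |b| ≤ 1 + δ := by
  have hlt : treeNorm K 0 f < ENNReal.ofReal (1 + δ) := by
    refine lt_of_le_of_lt h ?_
    rw [show (1:ℝ≥0∞) = ENNReal.ofReal 1 by simp]
    exact ENNReal.ofReal_lt_ofReal_iff (by linarith) |>.2 (by linarith)
  rw [treeNorm] at hlt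
  obtain ⟨⟨⟨w, b⟩, hp⟩, hplt⟩ := iInf_lt_iff.1 hlt
  refine ⟨w, b, hp, ?_⟩
  have := (ENNReal.ofReal_lt_ofReal_iff (by linarith)).1 hplt
  linarith

lemma treeNorm_succ_rep {d : ℕ} {K : Set (Fin d → ℝ)} {L : ℕ} {f : C(K, ℝ)}
    (h : treeNorm K (L + 1) f ≤ 1) {δ : ℝ} (hδ : 0 < δ) :
    ∃ μp μn : Measure C(K, ℝ),
      IsBarronRep K {g : C(K, ℝ) | treeNorm K L g ≤ 1} f μp μn ∧
      (μp Set.univ).toReal + (μn Set.univ).toReal ≤ 1 + δ := by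
  have hlt : treeNorm K (L + 1) f < ENNReal.ofReal (1 + δ) := by
    refine lt_of_le_of_lt h ?_
    rw [show (1:ℝ≥0∞) = ENNReal.ofReal 1 by simp]
    exact ENNReal.ofReal_lt_ofReal_iff (by linarith) |>.2 (by linarith)
  rw [treeNorm, barronNorm] at hlt
  obtain ⟨⟨⟨μp, μn⟩, hp⟩, hplt⟩ := iInf_lt_iff.1 hlt
  refine ⟨μp, μn, hp, ?_⟩
  have hsum : μp Set.univ + μn Set.univ < ⊤ := hplt.trans_le le_top
  have h1 : μp Set.univ ≠ ⊤ := ne_top_of_lt ((self_le_add_right _ _).trans_lt hsum)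
  have h2 : μn Set.univ ≠ ⊤ := ne_top_of_lt ((self_le_add_left _ _).trans_lt hsum)
  have := ENNReal.toReal_mono (by simp [ENNReal.ofReal_ne_top]) hplt.le
  rwa [ENNReal.toReal_add h1 h2, ENNReal.toReal_ofReal (by linarith)] at this

lemma treeNorm_bound {d : ℕ} {K : Set (Fin d → ℝ)} (hK : ∀ x : K, ∀ i, |(x : Fin d → ℝ) i| ≤ 1) :
    ∀ (L : ℕ) (f : C(K, ℝ)), treeNorm K L f ≤ 1 → ∀ x : K, |f x| ≤ 1 := by
  intro L
  induction L with
  | zero =>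
    intro f h x
    refine le_of_forall_one_add_mul zero_le_one fun δ hδ => ?_
    obtain ⟨w, b, hrep, hnorm⟩ := treeNorm_zero_rep h hδ
    rw [hrep x]
    calc |(∑ i : Fin d, w i * (x : Fin d → ℝ) i) + b|
        ≤ (∑ i : Fin d, |w i * (x : Fin d → ℝ) i|) + |b| :=
          (abs_add_le _ _).trans (by gcongr; exact Finset.abs_sum_le_sum_abs _ _)
      _ ≤ (∑ i : Fin d, |w i|) + |b| := by
          refine add_le_add (Finset.sum_le_sum fun i _ => ?_) le_rfl
          rw [abs_mul]
          exact mul_le_of_le_one_right (abs_nonneg _) (hK x i)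
      _ ≤ (1 + δ) * 1 := by rw [mul_one]; exact hnorm
  | succ L ih =>
    intro f h x
    refine le_of_forall_one_add_mul zero_le_one fun δ hδ => ?_
    obtain ⟨μp, μn, ⟨hfp, hfn, hp0, hn0, hrep⟩, hmass⟩ := treeNorm_succ_rep h hδ
    haveI := hfp; haveI := hfn
    have haep : ∀ᵐ g ∂μp, treeNorm K L g ≤ 1 := mem_ae_iff.2 hp0
    have haen : ∀ᵐ g ∂μn, treeNorm K L g ≤ 1 := mem_ae_iff.2 hn0
    have hbp : ∀ᵐ g ∂μp, |relu (g x)| ≤ 1 :=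
      haep.mono fun g hg => (abs_relu_le_abs _).trans (ih g hg x)
    have hbn : ∀ᵐ g ∂μn, |relu (g x)| ≤ 1 :=
      haen.mono fun g hg => (abs_relu_le_abs _).trans (ih g hg x)
    have hip : Integrable (fun g : C(K, ℝ) => relu (g x)) μp :=
      integrable_of_bound μp (continuous_reluEval x) hbp
    have hin : Integrable (fun g : C(K, ℝ) => relu (g x)) μn :=
      integrable_of_bound μn (continuous_reluEval x) hbn
    have h1 : ∫ g : C(K, ℝ), relu (g x) ∂μp ≤ (μp Set.univ).toReal := by
      have := integral_mono_ae hip (integrable_const 1)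
        (hbp.mono fun g hg => (le_abs_self _).trans hg)
      rwa [integral_const, smul_eq_mul, mul_one] at this
    have h2 : ∫ g : C(K, ℝ), relu (g x) ∂μn ≤ (μn Set.univ).toReal := by
      have := integral_mono_ae hin (integrable_const 1)
        (hbn.mono fun g hg => (le_abs_self _).trans hg)
      rwa [integral_const, smul_eq_mul, mul_one] at this
    have h3 : 0 ≤ ∫ g : C(K, ℝ), relu (g x) ∂μp :=
      integral_nonneg fun g => relu_nonneg _
    have h4 : 0 ≤ ∫ g : C(K, ℝ), relu (g x) ∂μn :=
      integral_nonneg fun g => relu_nonneg _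
    rw [hrep x, mul_one]
    rw [abs_sub_le_iff]
    constructor <;> [skip; skip] <;>
      have hm1 : (0:ℝ) ≤ (μp Set.univ).toReal := ENNReal.toReal_nonneg <;>
      have hm2 : (0:ℝ) ≤ (μn Set.univ).toReal := ENNReal.toReal_nonneg <;>
      linarith

lemma treeNorm_zero_fun {d : ℕ} (K : Set (Fin d → ℝ)) :
    ∀ L : ℕ, treeNorm K L (0 : C(K, ℝ)) ≤ 1 := by
  intro L
  cases L with
  | zero =>
    rw [treeNorm]
    refine le_trans (iInf_le _ ⟨⟨0, 0⟩, by intro x; simp⟩) ?_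
    simp
  | succ L =>
    rw [treeNorm, barronNorm]
    refine le_trans (iInf_le _ ⟨⟨0, 0⟩, ?_⟩)
      (by simp only [Measure.coe_zero, Pi.zero_apply, add_zero, zero_le])
    exact ⟨inferInstance, inferInstance, rfl, rfl,
      fun x => by simp only [integral_zero_measure, sub_zero, ContinuousMap.zero_apply]⟩


/-! ### sign vectors and sup machinery -/

def sg {N : ℕ} (ξ : Fin N → Bool) (i : Fin N) : ℝ := if ξ i then 1 else -1

lemma abs_sg {N : ℕ} (ξ : Fin N → Bool) (i : Fin N) : |sg ξ i| = 1 := by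
  unfold sg; split <;> simp

lemma sg_not {N : ℕ} (ξ : Fin N → Bool) (i : Fin N) : sg (fun j => !ξ j) i = -sg ξ i := by
  unfold sg; cases h : ξ i <;> simp [h]

section supstuff
variable {N : ℕ} {T : Set (Fin N → ℝ)}

lemma abs_SSum_le (hbd : ∀ t ∈ T, ∀ i, |t i| ≤ 1) {ψ : Fin N → ℝ → ℝ}
    (hψ : ∀ i u, |ψ i u| ≤ |u|) (ξ : Fin N → Bool) {t : Fin N → ℝ} (ht : t ∈ T) :
    |∑ i : Fin N, sg ξ i * ψ i (t i)| ≤ N := by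
  calc |∑ i : Fin N, sg ξ i * ψ i (t i)| ≤ ∑ i : Fin N, |sg ξ i * ψ i (t i)| :=
        Finset.abs_sum_le_sum_abs _ _
    _ ≤ ∑ _i : Fin N, (1:ℝ) := by
        refine Finset.sum_le_sum fun i _ => ?_
        rw [abs_mul, abs_sg, one_mul]
        exact (hψ i (t i)).trans (hbd t ht i)
    _ = N := by simp

lemma bddAbove_SSum (hbd : ∀ t ∈ T, ∀ i, |t i| ≤ 1) {ψ : Fin N → ℝ → ℝ}
    (hψ : ∀ i u, |ψ i u| ≤ |u|) (ξ : Fin N → Bool) :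
    BddAbove ((fun t => ∑ i : Fin N, sg ξ i * ψ i (t i)) '' T) := by
  refine ⟨N, fun x hx => ?_⟩
  obtain ⟨t, ht, rfl⟩ := hx
  exact (le_abs_self _).trans (abs_SSum_le hbd hψ ξ ht)

lemma key_ineq (hne : T.Nonempty) (a b : (Fin N → ℝ) → ℝ)
    (h1 : BddAbove ((fun t => a t + b t) '' T)) (h2 : BddAbove ((fun t => a t - b t) '' T)) :
    sSup ((fun t => a t + relu (b t)) '' T) + sSup ((fun t => a t - relu (b t)) '' T)
      ≤ sSup ((fun t => a t + b t) '' T) + sSup ((fun t => a t - b t) '' T) := by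
  set C1 := sSup ((fun t => a t + b t) '' T)
  set C2 := sSup ((fun t => a t - b t) '' T)
  have key : ∀ t ∈ T, ∀ t' ∈ T, (a t + relu (b t)) + (a t' - relu (b t')) ≤ C1 + C2 := by
    intro t ht t' ht'
    have hl := relu_lip (b t) (b t')
    rw [abs_le] at hl
    rcases le_total (b t) (b t') with hc | hc
    · have e1 : a t' + b t' ≤ C1 := le_csSup h1 ⟨t', ht', rfl⟩
      have e2 : a t - b t ≤ C2 := le_csSup h2 ⟨t, ht, rfl⟩
      have : relu (b t) - relu (b t') ≤ b t' - b t := by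
        have := hl.1; rw [abs_of_nonpos (by linarith)] at * <;> linarith
      linarith
    · have e1 : a t + b t ≤ C1 := le_csSup h1 ⟨t, ht, rfl⟩
      have e2 : a t' - b t' ≤ C2 := le_csSup h2 ⟨t', ht', rfl⟩
      have : relu (b t) - relu (b t') ≤ b t - b t' := by
        have := hl.2; rw [abs_of_nonneg (by linarith)] at this; linarith
      linarith
  have hA : sSup ((fun t => a t + relu (b t)) '' T) ≤
      C1 + C2 - sSup ((fun t => a t - relu (b t)) '' T) := by
    refine csSup_le (hne.image _) ?_
    rintro x ⟨t, ht, rfl⟩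
    rw [le_sub_iff_add_le, add_comm, ← le_sub_iff_add_le]
    refine csSup_le (hne.image _) ?_
    rintro y ⟨t', ht', rfl⟩
    have := key t ht t' ht'
    dsimp only
    linarith
  linarith

lemma contraction (hne : T.Nonempty) (hbd : ∀ t ∈ T, ∀ i, |t i| ≤ 1) :
    (∑ ξ : Fin N → Bool, sSup ((fun t => ∑ i : Fin N, sg ξ i * relu (t i)) '' T))
      ≤ ∑ ξ : Fin N → Bool, sSup ((fun t => ∑ i : Fin N, sg ξ i * t i) '' T) := by
  classical
  set ψA : Finset (Fin N) → Fin N → ℝ → ℝ := fun A i u => if i ∈ A then relu u else u with hψA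
  have hψabs : ∀ A : Finset (Fin N), ∀ i u, |ψA A i u| ≤ |u| := by
    intro A i u
    simp only [hψA]
    split
    · exact abs_relu_le_abs u
    · exact le_rfl
  set Φ : Finset (Fin N) → (Fin N → Bool) → ℝ := fun A ξ =>
    sSup ((fun t => ∑ i : Fin N, sg ξ i * ψA A i (t i)) '' T) with hΦ
  -- one-coordinate step
  have step : ∀ (A : Finset (Fin N)) (k : Fin N), k ∉ A →
      (∑ ξ : Fin N → Bool, Φ (insert k A) ξ) ≤ ∑ ξ : Fin N → Bool, Φ A ξ := by
    intro A k hk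
    set ik : (Fin N → Bool) → (Fin N → Bool) := fun ξ => Function.update ξ k (!ξ k) with hik
    have hinv : Function.Involutive ik := by
      intro ξ; funext j
      by_cases hj : j = k
      · subst hj; simp [hik, Function.update_self]
      · simp [hik, Function.update_of_ne hj]
    have hsum : ∀ F : (Fin N → Bool) → ℝ,
        (∑ ξ : Fin N → Bool, F (ik ξ)) = ∑ ξ : Fin N → Bool, F ξ :=
      fun F => Equiv.sum_comp hinv.toPerm F
    -- pointwise inequality
    have point : ∀ ξ : Fin N → Bool, Φ (insert k A) ξ + Φ (insert k A) (ik ξ)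
        ≤ Φ A ξ + Φ A (ik ξ) := by
      intro ξ
      set a : (Fin N → ℝ) → ℝ := fun t => ∑ i ∈ Finset.univ.erase k, sg ξ i * ψA A i (t i)
        with ha
      have hsg_ik : ∀ j : Fin N, j ≠ k → sg (ik ξ) j = sg ξ j := by
        intro j hj; unfold sg; rw [hik]; simp [Function.update_of_ne hj]
      have hsg_k : sg (ik ξ) k = -sg ξ k := by
        unfold sg; rw [hik]; cases h : ξ k <;> simp [h]
      have decomp : ∀ (B : Finset (Fin N)), k ∉ B → ∀ ζ : Fin N → Bool,
          (∀ j, j ≠ k → sg ζ j = sg ξ j) →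
          (fun t : Fin N → ℝ => ∑ i : Fin N, sg ζ i * ψA (insert k B) i (t i))
            = fun t => (∑ i ∈ Finset.univ.erase k, sg ξ i * ψA B i (t i))
                + sg ζ k * relu (t k) := by
        intro B hB ζ hζ
        funext t
        have e0 : ψA (insert k B) k (t k) = relu (t k) := by simp [hψA]
        have e1 : ∀ i, i ≠ k → ψA (insert k B) i (t i) = ψA B i (t i) := by
          intro i hi; simp only [hψA, Finset.mem_insert, hi, false_or]
        rw [← Finset.add_sum_erase _ _ (Finset.mem_univ k), e0, add_comm]
        congr 1
        refine Finset.sum_congr rfl fun i hi => ?_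
        have hik' : i ≠ k := (Finset.mem_erase.1 hi).1
        rw [hζ i hik', e1 i hik']
      have decomp2 : ∀ ζ : Fin N → Bool, (∀ j, j ≠ k → sg ζ j = sg ξ j) →
          (fun t : Fin N → ℝ => ∑ i : Fin N, sg ζ i * ψA A i (t i))
            = fun t => a t + sg ζ k * (t k) := by
        intro ζ hζ
        funext t
        have e0 : ψA A k (t k) = t k := by simp [hψA, hk]
        rw [← Finset.add_sum_erase _ _ (Finset.mem_univ k), e0, add_comm, ha]
        congr 1
        refine Finset.sum_congr rfl fun i hi => ?_
        have hik' : i ≠ k := (Finset.mem_erase.1 hi).1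
        rw [hζ i hik']
      -- note a = the erase-sum with B = A
      have decomp1 : ∀ ζ : Fin N → Bool, (∀ j, j ≠ k → sg ζ j = sg ξ j) →
          (fun t : Fin N → ℝ => ∑ i : Fin N, sg ζ i * ψA (insert k A) i (t i))
            = fun t => a t + sg ζ k * relu (t k) := by
        intro ζ hζ
        rw [decomp A hk ζ hζ, ha]
      have hself : ∀ j : Fin N, j ≠ k → sg ξ j = sg ξ j := fun _ _ => rfl
      have E1 : Φ (insert k A) ξ = sSup ((fun t => a t + sg ξ k * relu (t k)) '' T) := by
        simp only [hΦ]; rw [decomp1 ξ hself]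
      have E2 : Φ (insert k A) (ik ξ) =
          sSup ((fun t => a t + sg (ik ξ) k * relu (t k)) '' T) := by
        simp only [hΦ]; rw [decomp1 (ik ξ) hsg_ik]
      have E3 : Φ A ξ = sSup ((fun t => a t + sg ξ k * (t k)) '' T) := by
        simp only [hΦ]; rw [decomp2 ξ hself]
      have E4 : Φ A (ik ξ) = sSup ((fun t => a t + sg (ik ξ) k * (t k)) '' T) := by
        simp only [hΦ]; rw [decomp2 (ik ξ) hsg_ik]
      have hbdd1 : BddAbove ((fun t => a t + sg ξ k * (t k)) '' T) := by
        rw [← decomp2 ξ hself]; exact bddAbove_SSum hbd (hψabs A) ξ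
      have hbdd2 : BddAbove ((fun t => a t + sg (ik ξ) k * (t k)) '' T) := by
        rw [← decomp2 (ik ξ) hsg_ik]; exact bddAbove_SSum hbd (hψabs A) (ik ξ)
      rw [E1, E2, E3, E4]
      cases hξk : ξ k with
      | true =>
        have s1 : sg ξ k = 1 := by simp [sg, hξk]
        have s2 : sg (ik ξ) k = -1 := by rw [hsg_k, s1]
        rw [s1, s2]
        simp only [one_mul, neg_one_mul, ← sub_eq_add_neg]
        exact key_ineq hne a (fun t => t k)
          (by simpa only [s1, one_mul] using hbdd1)
          (by simpa only [s2, neg_one_mul, ← sub_eq_add_neg] using hbdd2)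
      | false =>
        have s1 : sg ξ k = -1 := by simp [sg, hξk]
        have s2 : sg (ik ξ) k = 1 := by rw [hsg_k, s1]; norm_num
        rw [s1, s2]
        simp only [one_mul, neg_one_mul, ← sub_eq_add_neg]
        rw [add_comm (sSup ((fun t => a t - relu (t k)) '' T)),
          add_comm (sSup ((fun t => a t - (t k)) '' T))]
        exact key_ineq hne a (fun t => t k)
          (by simpa only [s2, one_mul] using hbdd2)
          (by simpa only [s1, neg_one_mul, ← sub_eq_add_neg] using hbdd1)
    -- combine
    have h2 : (2:ℝ) * ∑ ξ : Fin N → Bool, Φ (insert k A) ξ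
        ≤ 2 * ∑ ξ : Fin N → Bool, Φ A ξ := by
      have e1 := hsum (Φ (insert k A))
      have e2 := hsum (Φ A)
      calc (2:ℝ) * ∑ ξ : Fin N → Bool, Φ (insert k A) ξ
          = ∑ ξ : Fin N → Bool, (Φ (insert k A) ξ + Φ (insert k A) (ik ξ)) := by
            rw [Finset.sum_add_distrib, e1]; ring
        _ ≤ ∑ ξ : Fin N → Bool, (Φ A ξ + Φ A (ik ξ)) :=
            Finset.sum_le_sum fun ξ _ => point ξ
        _ = 2 * ∑ ξ : Fin N → Bool, Φ A ξ := by
            rw [Finset.sum_add_distrib, e2]; ring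
    linarith
  -- full induction
  have main : ∀ A : Finset (Fin N),
      (∑ ξ : Fin N → Bool, Φ A ξ) ≤ ∑ ξ : Fin N → Bool, Φ ∅ ξ := by
    intro A
    induction A using Finset.induction_on with
    | empty => exact le_rfl
    | insert _ _ hk => exact le_trans (step _ _ hk) (by assumption)
  have huniv := main Finset.univ
  have e1 : Φ Finset.univ = fun ξ =>
      sSup ((fun t => ∑ i : Fin N, sg ξ i * relu (t i)) '' T) := by
    funext ξ; simp [hΦ, hψA]
  have e2 : Φ ∅ = fun ξ => sSup ((fun t => ∑ i : Fin N, sg ξ i * t i) '' T) := by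
    funext ξ; simp [hΦ, hψA]
  rw [e1, e2] at huniv
  exact huniv

end supstuff

/-! ### the sample-specific development -/

section main
variable {d N : ℕ} (S : Fin N → (cube d))

/-- Image vectors of the unit ball of `W^L` on the sample. -/
def Tset (L : ℕ) : Set (Fin N → ℝ) :=
  {t | ∃ F : C(cube d, ℝ), treeNorm (cube d) L F ≤ 1 ∧ t = fun i => F (S i)}

lemma zero_mem_Tset (L : ℕ) : (fun _ : Fin N => (0:ℝ)) ∈ Tset S L :=
  ⟨0, treeNorm_zero_fun _ L, by funext i; simp⟩

lemma Tset_nonempty (L : ℕ) : (Tset S L).Nonempty := ⟨_, zero_mem_Tset S L⟩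

lemma cube_prop {d : ℕ} (x : cube d) (i : Fin d) : |(x : Fin d → ℝ) i| ≤ 1 := by
  have hx : (x : Fin d → ℝ) ∈ {y : Fin d → ℝ | ∀ i, |y i| ≤ 1} := x.2
  rw [Set.mem_setOf_eq] at hx
  exact hx i

lemma Tset_bound (L : ℕ) : ∀ t ∈ Tset S L, ∀ i, |t i| ≤ 1 := by
  rintro t ⟨F, hF, rfl⟩ i
  exact treeNorm_bound (fun x j => cube_prop x j) L F hF (S i)

/-- The `2d+2` extreme affine directions. -/
abbrev dirIdx (d : ℕ) := (Fin d ⊕ Unit) × Bool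

def avec (k : dirIdx d) (i : Fin N) : ℝ :=
  (if k.2 then (1:ℝ) else -1) * Sum.elim (fun j => (S i).1 j) (fun _ => (1:ℝ)) k.1

lemma abs_avec_le (k : dirIdx d) (i : Fin N) : |avec S k i| ≤ 1 := by
  unfold avec
  rw [abs_mul]
  have h1 : |if k.2 then (1:ℝ) else -1| = 1 := by split <;> simp
  rw [h1, one_mul]
  rcases k with ⟨j | u, b⟩
  · exact cube_prop (S i) j
  · simp

def Zdir (k : dirIdx d) (ξ : Fin N → Bool) : ℝ := ∑ i : Fin N, sg ξ i * avec S k i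

def Mmax (ξ : Fin N → Bool) : ℝ := Finset.univ.sup' ⟨(Sum.inr (), true), Finset.mem_univ _⟩
  (fun k => Zdir S k ξ)

lemma Zdir_le_Mmax (k : dirIdx d) (ξ : Fin N → Bool) : Zdir S k ξ ≤ Mmax S ξ := by
  unfold Mmax
  exact Finset.le_sup' (fun k => Zdir S k ξ) (Finset.mem_univ k)

lemma Zdir_neg (j : Fin d ⊕ Unit) (ξ : Fin N → Bool) :
    Zdir S (j, false) ξ = -Zdir S (j, true) ξ := by
  unfold Zdir avec
  rw [← Finset.sum_neg_distrib]
  refine Finset.sum_congr rfl fun i _ => by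
    simp only [Bool.false_eq_true, if_false, if_pos]
    ring

lemma Mmax_nonneg (ξ : Fin N → Bool) : 0 ≤ Mmax S ξ := by
  have h1 := Zdir_le_Mmax S (Sum.inr (), true) ξ
  have h2 := Zdir_le_Mmax S (Sum.inr (), false) ξ
  rw [Zdir_neg] at h2
  linarith

lemma abs_Zdir_true_le (j : Fin d ⊕ Unit) (ξ : Fin N → Bool) :
    |Zdir S (j, true) ξ| ≤ Mmax S ξ := by
  rw [abs_le]
  have h1 := Zdir_le_Mmax S (j, true) ξ
  have h2 := Zdir_le_Mmax S (j, false) ξ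
  rw [Zdir_neg] at h2
  constructor <;> linarith

lemma D0_le_Mmax (ξ : Fin N → Bool) :
    sSup ((fun t => ∑ i : Fin N, sg ξ i * t i) '' Tset S 0) ≤ Mmax S ξ := by
  refine csSup_le ((Tset_nonempty S 0).image _) ?_
  rintro x ⟨t, ⟨F, hF, rfl⟩, rfl⟩
  dsimp only
  refine le_of_forall_one_add_mul (Mmax_nonneg S ξ) fun δ hδ => ?_
  obtain ⟨w, b, hrep, hnorm⟩ := treeNorm_zero_rep hF hδ
  have expand : (∑ i : Fin N, sg ξ i * F (S i))
      = (∑ j : Fin d, w j * Zdir S (Sum.inl j, true) ξ) + b * Zdir S (Sum.inr (), true) ξ := by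
    unfold Zdir avec
    simp only [if_pos, Sum.elim_inl, Sum.elim_inr, one_mul]
    calc (∑ i : Fin N, sg ξ i * F (S i))
        = ∑ i : Fin N, ((∑ j : Fin d, w j * (sg ξ i * (S i).1 j)) + b * sg ξ i) := by
          refine Finset.sum_congr rfl fun i _ => ?_
          rw [hrep (S i)]
          rw [mul_add, Finset.mul_sum]
          congr 1
          · exact Finset.sum_congr rfl fun j _ => by ring
          · ring
      _ = _ := by
          rw [Finset.sum_add_distrib, Finset.sum_comm, ← Finset.mul_sum]
          congr 1
          · exact Finset.sum_congr rfl fun j _ => by rw [Finset.mul_sum]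
          · simp only [mul_one]
  rw [expand]
  have hb1 : ∀ j : Fin d, w j * Zdir S (Sum.inl j, true) ξ ≤ |w j| * Mmax S ξ := by
    intro j
    calc w j * Zdir S (Sum.inl j, true) ξ ≤ |w j * Zdir S (Sum.inl j, true) ξ| := le_abs_self _
      _ = |w j| * |Zdir S (Sum.inl j, true) ξ| := abs_mul _ _
      _ ≤ |w j| * Mmax S ξ :=
          mul_le_mul_of_nonneg_left (abs_Zdir_true_le S _ ξ) (abs_nonneg _)
  have hb2 : b * Zdir S (Sum.inr (), true) ξ ≤ |b| * Mmax S ξ := by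
    calc b * Zdir S (Sum.inr (), true) ξ ≤ |b * Zdir S (Sum.inr (), true) ξ| := le_abs_self _
      _ = |b| * |Zdir S (Sum.inr (), true) ξ| := abs_mul _ _
      _ ≤ |b| * Mmax S ξ :=
          mul_le_mul_of_nonneg_left (abs_Zdir_true_le S _ ξ) (abs_nonneg _)
  calc (∑ j : Fin d, w j * Zdir S (Sum.inl j, true) ξ) + b * Zdir S (Sum.inr (), true) ξ
      ≤ (∑ j : Fin d, |w j| * Mmax S ξ) + |b| * Mmax S ξ :=
        add_le_add (Finset.sum_le_sum fun j _ => hb1 j) hb2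
    _ = ((∑ j : Fin d, |w j|) + |b|) * Mmax S ξ := by rw [add_mul, Finset.sum_mul]
    _ ≤ (1 + δ) * Mmax S ξ :=
        mul_le_mul_of_nonneg_right hnorm (Mmax_nonneg S ξ)


lemma card_dirIdx : (Fintype.card (dirIdx d) : ℝ) = 2 * d + 2 := by
  simp [dirIdx]
  ring

lemma massart (hN : 0 < N) :
    (∑ ξ : Fin N → Bool, Mmax S ξ)
      ≤ 2 ^ N * Real.sqrt (2 * N * Real.log (2 * d + 2)) := by
  set Lm : ℝ := Real.log (2 * d + 2) with hLm
  have hLmpos : 0 < Lm := Real.log_pos (by have : (0:ℝ) ≤ d := Nat.cast_nonneg d; linarith)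
  have hNpos : (0:ℝ) < N := Nat.cast_pos.2 hN
  set lam : ℝ := Real.sqrt (2 * Lm / N) with hlam
  have hlampos : 0 < lam := Real.sqrt_pos.2 (by positivity)
  have hlamsq : lam ^ 2 = 2 * Lm / N := Real.sq_sqrt (by positivity)
  set Y : (Fin N → Bool) → ℝ := fun ξ => ∑ k : dirIdx d, Real.exp (lam * Zdir S k ξ) with hY
  have hYpos : ∀ ξ, 0 < Y ξ := fun ξ =>
    Finset.sum_pos (fun k _ => Real.exp_pos _) ⟨(Sum.inr (), true), Finset.mem_univ _⟩
  -- step 1 : M ≤ lam⁻¹ log Y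
  have step1 : ∀ ξ, Mmax S ξ ≤ lam⁻¹ * Real.log (Y ξ) := by
    intro ξ
    obtain ⟨k0, _, hk0⟩ := Finset.exists_mem_eq_sup' (α := ℝ)
      (⟨(Sum.inr (), true), Finset.mem_univ _⟩ :
        (Finset.univ : Finset (dirIdx d)).Nonempty) (fun k => Zdir S k ξ)
    have h1 : lam * Mmax S ξ ≤ Real.log (Y ξ) := by
      rw [Real.le_log_iff_exp_le (hYpos ξ)]
      have : Mmax S ξ = Zdir S k0 ξ := hk0
      rw [this]
      exact Finset.single_le_sum (f := fun k => Real.exp (lam * Zdir S k ξ))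
        (fun k _ => (Real.exp_pos _).le) (Finset.mem_univ k0)
    calc Mmax S ξ = lam⁻¹ * (lam * Mmax S ξ) := by field_simp
      _ ≤ lam⁻¹ * Real.log (Y ξ) :=
          mul_le_mul_of_nonneg_left h1 (inv_nonneg.2 hlampos.le)
  -- step 2 : Jensen
  have card2N : (Fintype.card (Fin N → Bool) : ℝ) = 2 ^ N := by
    simp [Fintype.card_fun]
  have step2 : (∑ ξ : Fin N → Bool, Real.log (Y ξ))
      ≤ 2 ^ N * Real.log (((2:ℝ) ^ N)⁻¹ * ∑ ξ : Fin N → Bool, Y ξ) := by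
    have hw : (∑ _ξ : Fin N → Bool, ((2:ℝ) ^ N)⁻¹) = 1 := by
      rw [Finset.sum_const, Finset.card_univ, nsmul_eq_mul, card2N]
      field_simp
    have hjen := (strictConcaveOn_log_Ioi.concaveOn).le_map_sum
      (t := Finset.univ) (w := fun _ : Fin N → Bool => ((2:ℝ) ^ N)⁻¹) (p := Y)
      (fun _ _ => by positivity) hw (fun ξ _ => hYpos ξ)
    simp only [smul_eq_mul] at hjen
    have e1 : (∑ ξ : Fin N → Bool, ((2:ℝ) ^ N)⁻¹ * Y ξ)
        = ((2:ℝ) ^ N)⁻¹ * ∑ ξ : Fin N → Bool, Y ξ := by rw [Finset.mul_sum]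
    rw [e1] at hjen
    have e2 : (∑ ξ : Fin N → Bool, ((2:ℝ) ^ N)⁻¹ * Real.log (Y ξ))
        = ((2:ℝ) ^ N)⁻¹ * ∑ ξ : Fin N → Bool, Real.log (Y ξ) := by rw [Finset.mul_sum]
    rw [e2] at hjen
    have h2N : (0:ℝ) < 2 ^ N := by positivity
    calc (∑ ξ : Fin N → Bool, Real.log (Y ξ))
        = 2 ^ N * (((2:ℝ) ^ N)⁻¹ * ∑ ξ : Fin N → Bool, Real.log (Y ξ)) := by
          field_simp
      _ ≤ 2 ^ N * Real.log (((2:ℝ) ^ N)⁻¹ * ∑ ξ : Fin N → Bool, Y ξ) :=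
          mul_le_mul_of_nonneg_left hjen h2N.le
  -- step 3 : MGF bound
  have mgf : ∀ k : dirIdx d, (∑ ξ : Fin N → Bool, Real.exp (lam * Zdir S k ξ))
      ≤ (2 * Real.exp (lam ^ 2 / 2)) ^ N := by
    intro k
    have expand : ∀ ξ, Real.exp (lam * Zdir S k ξ)
        = ∏ i : Fin N, Real.exp (lam * (sg ξ i * avec S k i)) := by
      intro ξ
      rw [← Real.exp_sum]
      congr 1
      rw [Zdir, Finset.mul_sum]
    have prodsum : (∑ ξ : Fin N → Bool, ∏ i : Fin N, Real.exp (lam * (sg ξ i * avec S k i)))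
        = ∏ i : Fin N, ∑ c : Bool, Real.exp (lam * ((if c then (1:ℝ) else -1) * avec S k i)) := by
      rw [Finset.prod_univ_sum (fun _ => (Finset.univ : Finset Bool))
        (fun i c => Real.exp (lam * ((if c then (1:ℝ) else -1) * avec S k i)))]
      rw [Fintype.piFinset_univ]
      rfl
    have factor : ∀ i : Fin N,
        (∑ c : Bool, Real.exp (lam * ((if c then (1:ℝ) else -1) * avec S k i)))
          ≤ 2 * Real.exp (lam ^ 2 / 2) := by
      intro i
      rw [Fintype.sum_bool]
      simp only [if_true, Bool.false_eq_true, if_false]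
      have hch : Real.exp (lam * (1 * avec S k i)) + Real.exp (lam * (-1 * avec S k i))
          = 2 * Real.cosh (lam * avec S k i) := by
        rw [Real.cosh_eq, show lam * (1 * avec S k i) = lam * avec S k i by ring,
          show lam * (-1 * avec S k i) = -(lam * avec S k i) by ring]
        ring
      rw [hch]
      have h1 : Real.cosh (lam * avec S k i) ≤ Real.exp ((lam * avec S k i) ^ 2 / 2) :=
        Real.cosh_le_exp_half_sq _
      have h2 : (lam * avec S k i) ^ 2 / 2 ≤ lam ^ 2 / 2 := by
        have := abs_avec_le S k i
        have h4 : (avec S k i) ^ 2 ≤ 1 := by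
          rw [← sq_abs]
          nlinarith [abs_nonneg (avec S k i)]
        have h3 : (lam * avec S k i) ^ 2 ≤ lam ^ 2 := by
          rw [mul_pow]
          nlinarith [sq_nonneg lam]
        linarith
      have := h1.trans (Real.exp_le_exp.2 h2)
      linarith
    calc (∑ ξ : Fin N → Bool, Real.exp (lam * Zdir S k ξ))
        = ∏ i : Fin N, ∑ c : Bool, Real.exp (lam * ((if c then (1:ℝ) else -1) * avec S k i)) := by
          rw [← prodsum]; exact Finset.sum_congr rfl fun ξ _ => expand ξ
      _ ≤ ∏ _i : Fin N, (2 * Real.exp (lam ^ 2 / 2)) := by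
          refine Finset.prod_le_prod (fun i _ => ?_) (fun i _ => factor i)
          positivity
      _ = (2 * Real.exp (lam ^ 2 / 2)) ^ N := by
          rw [Finset.prod_const, Finset.card_univ, Fintype.card_fin]
  have step3 : (∑ ξ : Fin N → Bool, Y ξ) ≤ (2 * d + 2) * (2 * Real.exp (lam ^ 2 / 2)) ^ N := by
    rw [hY, Finset.sum_comm]
    calc (∑ k : dirIdx d, ∑ ξ : Fin N → Bool, Real.exp (lam * Zdir S k ξ))
        ≤ ∑ _k : dirIdx d, (2 * Real.exp (lam ^ 2 / 2)) ^ N :=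
          Finset.sum_le_sum fun k _ => mgf k
      _ = (2 * d + 2) * (2 * Real.exp (lam ^ 2 / 2)) ^ N := by
          rw [Finset.sum_const, Finset.card_univ, nsmul_eq_mul, card_dirIdx]
  -- step 4 : combine
  have harg : ((2:ℝ) ^ N)⁻¹ * ((2 * d + 2) * (2 * Real.exp (lam ^ 2 / 2)) ^ N)
      = (2 * d + 2) * Real.exp (N * (lam ^ 2 / 2)) := by
    rw [mul_pow, Real.exp_nat_mul]
    have h2N : ((2:ℝ) ^ N) ≠ 0 := by positivity
    field_simp
  have hlog : Real.log ((2 * (d:ℝ) + 2) * Real.exp (N * (lam ^ 2 / 2)))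
      = Lm + N * (lam ^ 2 / 2) := by
    rw [Real.log_mul (by positivity) (Real.exp_ne_zero _), Real.log_exp, hLm]
  have hNlam : (N:ℝ) * (lam ^ 2 / 2) = Lm := by
    rw [hlamsq]
    field_simp
  have hfin : lam⁻¹ * (2 * Lm) = Real.sqrt (2 * N * Lm) := by
    have hprod : lam * Real.sqrt (2 * N * Lm) = 2 * Lm := by
      rw [hlam, ← Real.sqrt_mul (by positivity)]
      have : 2 * Lm / N * (2 * N * Lm) = (2 * Lm) ^ 2 := by field_simp
      rw [this, Real.sqrt_sq (by positivity)]
    have hln : lam ≠ 0 := ne_of_gt hlampos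
    rw [← hprod]
    field_simp
  calc (∑ ξ : Fin N → Bool, Mmax S ξ)
      ≤ ∑ ξ : Fin N → Bool, lam⁻¹ * Real.log (Y ξ) := Finset.sum_le_sum fun ξ _ => step1 ξ
    _ = lam⁻¹ * ∑ ξ : Fin N → Bool, Real.log (Y ξ) := by rw [Finset.mul_sum]
    _ ≤ lam⁻¹ * (2 ^ N * Real.log (((2:ℝ) ^ N)⁻¹ * ∑ ξ : Fin N → Bool, Y ξ)) :=
        mul_le_mul_of_nonneg_left step2 (inv_nonneg.2 hlampos.le)
    _ ≤ lam⁻¹ * (2 ^ N * (Lm + N * (lam ^ 2 / 2))) := by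
        refine mul_le_mul_of_nonneg_left ?_ (inv_nonneg.2 hlampos.le)
        refine mul_le_mul_of_nonneg_left ?_ (by positivity)
        rw [← hlog]
        have hsumY : (0:ℝ) < ∑ ξ : Fin N → Bool, Y ξ :=
          Finset.sum_pos (fun ξ _ => hYpos ξ) Finset.univ_nonempty
        refine Real.log_le_log (mul_pos (by positivity) hsumY) ?_
        calc ((2:ℝ) ^ N)⁻¹ * ∑ ξ : Fin N → Bool, Y ξ
            ≤ ((2:ℝ) ^ N)⁻¹ * ((2 * d + 2) * (2 * Real.exp (lam ^ 2 / 2)) ^ N) :=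
              mul_le_mul_of_nonneg_left step3 (by positivity)
          _ = (2 * d + 2) * Real.exp (N * (lam ^ 2 / 2)) := harg
    _ = 2 ^ N * Real.sqrt (2 * N * Lm) := by
        rw [hNlam, ← hfin]; ring
    _ = 2 ^ N * Real.sqrt (2 * N * Real.log (2 * d + 2)) := by rw [hLm]


/-! ### the induction over levels -/

lemma bddAbove_Tlin (L : ℕ) (ξ : Fin N → Bool) :
    BddAbove ((fun t => ∑ i : Fin N, sg ξ i * t i) '' Tset S L) := by
  have := bddAbove_SSum (T := Tset S L) (Tset_bound S L)
    (ψ := fun _ u => u) (fun i u => le_rfl) ξ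
  exact this

lemma bddAbove_Trelu (L : ℕ) (ξ : Fin N → Bool) :
    BddAbove ((fun t => ∑ i : Fin N, sg ξ i * relu (t i)) '' Tset S L) := by
  have := bddAbove_SSum (T := Tset S L) (Tset_bound S L)
    (ψ := fun _ u => relu u) (fun i u => abs_relu_le_abs u) ξ
  exact this

lemma bddAbove_Tabs (L : ℕ) (ξ : Fin N → Bool) :
    BddAbove ((fun t => |∑ i : Fin N, sg ξ i * relu (t i)|) '' Tset S L) := by
  refine ⟨N, ?_⟩
  rintro x ⟨t, ht, rfl⟩
  exact abs_SSum_le (Tset_bound S L) (fun i u => abs_relu_le_abs u) ξ ht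

lemma zero_mem_abs (L : ℕ) (ξ : Fin N → Bool) :
    (0:ℝ) ∈ ((fun t => |∑ i : Fin N, sg ξ i * relu (t i)|) '' Tset S L) :=
  ⟨_, zero_mem_Tset S L, by simp [relu_zero]⟩

lemma Babs_nonneg (L : ℕ) (ξ : Fin N → Bool) :
    0 ≤ sSup ((fun t => |∑ i : Fin N, sg ξ i * relu (t i)|) '' Tset S L) :=
  le_csSup (bddAbove_Tabs S L ξ) (zero_mem_abs S L ξ)

lemma Crelu_nonneg (L : ℕ) (ξ : Fin N → Bool) :
    0 ≤ sSup ((fun t => ∑ i : Fin N, sg ξ i * relu (t i)) '' Tset S L) := by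
  refine le_csSup (bddAbove_Trelu S L ξ) ⟨_, zero_mem_Tset S L, by simp [relu_zero]⟩

/-- The key representation step: level `L+1` sups are controlled by level-`L`
absolute relu sups. -/
lemma sup_succ_le (L : ℕ) (ξ : Fin N → Bool) :
    sSup ((fun t => ∑ i : Fin N, sg ξ i * t i) '' Tset S (L + 1))
      ≤ sSup ((fun t => |∑ i : Fin N, sg ξ i * relu (t i)|) '' Tset S L) := by
  set B := sSup ((fun t => |∑ i : Fin N, sg ξ i * relu (t i)|) '' Tset S L) with hBdef
  refine csSup_le ((Tset_nonempty S (L + 1)).image _) ?_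
  rintro x ⟨t, ⟨F, hF, rfl⟩, rfl⟩
  dsimp only
  refine le_of_forall_one_add_mul (Babs_nonneg S L ξ) fun δ hδ => ?_
  obtain ⟨μp, μn, ⟨hfp, hfn, hp0, hn0, hrep⟩, hmass⟩ := treeNorm_succ_rep hF hδ
  haveI := hfp; haveI := hfn
  have haep : ∀ᵐ g ∂μp, treeNorm (cube d) L g ≤ 1 := mem_ae_iff.2 hp0
  have haen : ∀ᵐ g ∂μn, treeNorm (cube d) L g ≤ 1 := mem_ae_iff.2 hn0
  set h : C(cube d, ℝ) → ℝ := fun g => ∑ i : Fin N, sg ξ i * relu (g (S i)) with hh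
  have hcont : ∀ i : Fin N, Continuous fun g : C(cube d, ℝ) => sg ξ i * relu (g (S i)) :=
    fun i => continuous_const.mul (continuous_reluEval (S i))
  have hbdd : ∀ g : C(cube d, ℝ), treeNorm (cube d) L g ≤ 1 →
      ∀ i : Fin N, |sg ξ i * relu (g (S i))| ≤ 1 := by
    intro g hg i
    rw [abs_mul, abs_sg, one_mul]
    exact (abs_relu_le_abs _).trans (treeNorm_bound (fun x j => cube_prop x j) L g hg (S i))
  have Ip : ∀ i : Fin N, Integrable (fun g : C(cube d, ℝ) => sg ξ i * relu (g (S i))) μp :=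
    fun i => integrable_of_bound μp (hcont i) (haep.mono fun g hg => hbdd g hg i)
  have In : ∀ i : Fin N, Integrable (fun g : C(cube d, ℝ) => sg ξ i * relu (g (S i))) μn :=
    fun i => integrable_of_bound μn (hcont i) (haen.mono fun g hg => hbdd g hg i)
  have Ihp : Integrable h μp := by
    rw [hh]; exact integrable_finset_sum _ fun i _ => Ip i
  have Ihn : Integrable h μn := by
    rw [hh]; exact integrable_finset_sum _ fun i _ => In i
  have hub : ∀ g : C(cube d, ℝ), treeNorm (cube d) L g ≤ 1 → |h g| ≤ B := by
    intro g hg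
    refine le_csSup (bddAbove_Tabs S L ξ) ⟨fun i => g (S i), ⟨g, hg, rfl⟩, rfl⟩
  have hup : ∫ g, h g ∂μp ≤ B * (μp Set.univ).toReal := by
    have := integral_mono_ae Ihp (integrable_const B)
      (haep.mono fun g hg => (le_abs_self _).trans (hub g hg))
    rwa [integral_const, smul_eq_mul, mul_comm] at this
  have hdn : -(B * (μn Set.univ).toReal) ≤ ∫ g, h g ∂μn := by
    have hlow : ∀ᵐ g ∂μn, -B ≤ h g :=
      haen.mono fun g hg => le_trans (neg_le_neg (hub g hg)) (neg_abs_le _)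
    have := integral_mono_ae (integrable_const (-B)) Ihn hlow
    rwa [integral_const, smul_eq_mul, mul_neg, mul_comm (μn.real Set.univ) B] at this
  have heq : (∑ i : Fin N, sg ξ i * F (S i)) = (∫ g, h g ∂μp) - ∫ g, h g ∂μn := by
    have e1 : (∑ i : Fin N, sg ξ i * F (S i))
        = ∑ i : Fin N, (sg ξ i * (∫ g : C(cube d, ℝ), relu (g (S i)) ∂μp)
            - sg ξ i * (∫ g : C(cube d, ℝ), relu (g (S i)) ∂μn)) := by
      refine Finset.sum_congr rfl fun i _ => ?_
      rw [hrep (S i), mul_sub]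
    rw [e1, Finset.sum_sub_distrib]
    congr 1
    · rw [hh, integral_finset_sum _ fun i _ => Ip i]
      exact Finset.sum_congr rfl fun i _ => (integral_const_mul _ _).symm
    · rw [hh, integral_finset_sum _ fun i _ => In i]
      exact Finset.sum_congr rfl fun i _ => (integral_const_mul _ _).symm
  rw [heq]
  have hBnn := Babs_nonneg S L ξ
  calc (∫ g, h g ∂μp) - ∫ g, h g ∂μn
      ≤ B * (μp Set.univ).toReal + B * (μn Set.univ).toReal := by linarith
    _ = B * ((μp Set.univ).toReal + (μn Set.univ).toReal) := by ring
    _ ≤ B * (1 + δ) := mul_le_mul_of_nonneg_left hmass hBnn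
    _ = (1 + δ) * B := by ring

lemma abs_sup_le (L : ℕ) (ξ : Fin N → Bool) :
    sSup ((fun t => |∑ i : Fin N, sg ξ i * relu (t i)|) '' Tset S L)
      ≤ sSup ((fun t => ∑ i : Fin N, sg ξ i * relu (t i)) '' Tset S L)
        + sSup ((fun t => ∑ i : Fin N, sg (fun j => !ξ j) i * relu (t i)) '' Tset S L) := by
  refine csSup_le ((Tset_nonempty S L).image _) ?_
  rintro x ⟨t, ht, rfl⟩
  dsimp only
  have h1 : (∑ i : Fin N, sg ξ i * relu (t i))
      ≤ sSup ((fun t => ∑ i : Fin N, sg ξ i * relu (t i)) '' Tset S L) :=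
    le_csSup (bddAbove_Trelu S L ξ) ⟨t, ht, rfl⟩
  have hneg : (-(∑ i : Fin N, sg ξ i * relu (t i)))
      = ∑ i : Fin N, sg (fun j => !ξ j) i * relu (t i) := by
    rw [← Finset.sum_neg_distrib]
    exact Finset.sum_congr rfl fun i _ => by rw [sg_not]; ring
  have h2' : (∑ i : Fin N, sg (fun j => !ξ j) i * relu (t i))
      ≤ sSup ((fun t => ∑ i : Fin N, sg (fun j => !ξ j) i * relu (t i)) '' Tset S L) :=
    le_csSup (bddAbove_Trelu S L _) ⟨t, ht, rfl⟩
  have h2 : -(∑ i : Fin N, sg ξ i * relu (t i))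
      ≤ sSup ((fun t => ∑ i : Fin N, sg (fun j => !ξ j) i * relu (t i)) '' Tset S L) :=
    hneg.trans_le h2'
  have h3 := Crelu_nonneg S L ξ
  have h4 := Crelu_nonneg S L (fun j => !ξ j)
  rcases abs_cases (∑ i : Fin N, sg ξ i * relu (t i)) with ⟨he, _⟩ | ⟨he, _⟩ <;>
    rw [he] <;> linarith

lemma level_bound (hN : 0 < N) (L : ℕ) :
    (∑ ξ : Fin N → Bool, sSup ((fun t => ∑ i : Fin N, sg ξ i * t i) '' Tset S L))
      ≤ 2 ^ L * (2 ^ N * Real.sqrt (2 * N * Real.log (2 * d + 2))) := by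
  induction L with
  | zero =>
    rw [pow_zero, one_mul]
    calc (∑ ξ : Fin N → Bool, sSup ((fun t => ∑ i : Fin N, sg ξ i * t i) '' Tset S 0))
        ≤ ∑ ξ : Fin N → Bool, Mmax S ξ := Finset.sum_le_sum fun ξ _ => D0_le_Mmax S ξ
      _ ≤ 2 ^ N * Real.sqrt (2 * N * Real.log (2 * d + 2)) := massart S hN
  | succ L ih =>
    have hinv : Function.Involutive (fun ξ : Fin N → Bool => fun j => !ξ j) := by
      intro ξ; funext j; simp
    have hflip : (∑ ξ : Fin N → Bool,
        sSup ((fun t => ∑ i : Fin N, sg (fun j => !ξ j) i * relu (t i)) '' Tset S L))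
        = ∑ ξ : Fin N → Bool,
          sSup ((fun t => ∑ i : Fin N, sg ξ i * relu (t i)) '' Tset S L) :=
      Fintype.sum_equiv hinv.toPerm _ _
        (fun ξ => by rw [Function.Involutive.coe_toPerm])
    calc (∑ ξ : Fin N → Bool, sSup ((fun t => ∑ i : Fin N, sg ξ i * t i) '' Tset S (L+1)))
        ≤ ∑ ξ : Fin N → Bool,
            sSup ((fun t => |∑ i : Fin N, sg ξ i * relu (t i)|) '' Tset S L) :=
          Finset.sum_le_sum fun ξ _ => sup_succ_le S L ξ
      _ ≤ ∑ ξ : Fin N → Bool,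
            (sSup ((fun t => ∑ i : Fin N, sg ξ i * relu (t i)) '' Tset S L)
              + sSup ((fun t => ∑ i : Fin N, sg (fun j => !ξ j) i * relu (t i)) '' Tset S L)) :=
          Finset.sum_le_sum fun ξ _ => abs_sup_le S L ξ
      _ = 2 * ∑ ξ : Fin N → Bool,
            sSup ((fun t => ∑ i : Fin N, sg ξ i * relu (t i)) '' Tset S L) := by
          rw [Finset.sum_add_distrib, hflip]; ring
      _ ≤ 2 * ∑ ξ : Fin N → Bool,
            sSup ((fun t => ∑ i : Fin N, sg ξ i * t i) '' Tset S L) := by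
          have := contraction (Tset_nonempty S L) (Tset_bound S L)
          linarith
      _ ≤ 2 * (2 ^ L * (2 ^ N * Real.sqrt (2 * N * Real.log (2 * d + 2)))) := by linarith
      _ = 2 ^ (L+1) * (2 ^ N * Real.sqrt (2 * N * Real.log (2 * d + 2))) := by ring

end main

lemma coe_sum_EReal {α : Type*} (s : Finset α) (f : α → ℝ) :
    ((∑ x ∈ s, f x : ℝ) : EReal) = ∑ x ∈ s, ((f x : ℝ) : EReal) := by
  induction s using Finset.cons_induction with
  | empty => simp
  | cons a s ha ih => rw [Finset.sum_cons, Finset.sum_cons, EReal.coe_add, ih]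

end Rad14
end

theorem rademacher_treeSpace_bound' {d : ℕ} (L N : ℕ) (hN : 0 < N)
    (S : Fin N → cube d) :
    rademacher {h : cube d → ℝ | ∃ F : C(cube d, ℝ), treeNorm (cube d) L F ≤ 1 ∧ h = ⇑F} S
      ≤ (((2 : ℝ) ^ L * Real.sqrt (2 * Real.log (2 * d + 2) / N) : ℝ) : EReal) := by
  classical
  set D : (Fin N → Bool) → ℝ := fun ξ =>
    sSup ((fun t => ∑ i : Fin N, Rad14.sg ξ i * t i) '' Rad14.Tset S L) with hD
  have hterm : ∀ ξ : Fin N → Bool,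
      (⨆ h ∈ {h : cube d → ℝ | ∃ F : C(cube d, ℝ), treeNorm (cube d) L F ≤ 1 ∧ h = ⇑F},
        ((((N : ℝ))⁻¹ * ∑ i : Fin N, (if ξ i then (1 : ℝ) else -1) * h (S i) : ℝ) : EReal))
      ≤ ((((N : ℝ))⁻¹ * D ξ : ℝ) : EReal) := by
    intro ξ
    refine iSup₂_le fun h hh => ?_
    obtain ⟨F, hF, rfl⟩ := hh
    rw [EReal.coe_le_coe_iff]
    refine mul_le_mul_of_nonneg_left ?_ (inv_nonneg.2 (Nat.cast_nonneg N))
    have he : (∑ i : Fin N, (if ξ i then (1:ℝ) else -1) * F (S i))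
        = (fun t => ∑ i : Fin N, Rad14.sg ξ i * t i) (fun i => F (S i)) := rfl
    rw [he, hD]
    exact le_csSup (Rad14.bddAbove_Tlin S L ξ) ⟨fun i => F (S i), ⟨F, hF, rfl⟩, rfl⟩
  rw [rademacher]
  have hsum : (∑ ξ : Fin N → Bool,
      ⨆ h ∈ {h : cube d → ℝ | ∃ F : C(cube d, ℝ), treeNorm (cube d) L F ≤ 1 ∧ h = ⇑F},
        ((((N : ℝ))⁻¹ * ∑ i : Fin N, (if ξ i then (1 : ℝ) else -1) * h (S i) : ℝ) : EReal))
      ≤ (((∑ ξ : Fin N → Bool, ((N : ℝ))⁻¹ * D ξ) : ℝ) : EReal) := by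
    rw [Rad14.coe_sum_EReal]
    exact Finset.sum_le_sum fun ξ _ => hterm ξ
  have hc : (0:ℝ) ≤ ((2:ℝ) ^ N)⁻¹ := by positivity
  have hmul := mul_le_mul_of_nonneg_left hsum (EReal.coe_nonneg.2 hc)
  refine le_trans hmul ?_
  rw [← EReal.coe_mul, EReal.coe_le_coe_iff]
  -- real arithmetic
  set Lm : ℝ := Real.log (2 * d + 2) with hLm
  have hLmpos : 0 < Lm := Real.log_pos (by have : (0:ℝ) ≤ d := Nat.cast_nonneg d; linarith)
  have hlvl := Rad14.level_bound S hN L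
  have hNpos : (0:ℝ) < N := Nat.cast_pos.2 hN
  have hsq : Real.sqrt (2 * Lm / N) * N = Real.sqrt (2 * N * Lm) := by
    have h1 : Real.sqrt (2 * Lm / (N:ℝ)) * Real.sqrt (((N:ℝ)) ^ 2)
        = Real.sqrt ((2 * Lm / (N:ℝ)) * ((N:ℝ)) ^ 2) := (Real.sqrt_mul (by positivity) _).symm
    have h2 : (2 * Lm / (N:ℝ)) * ((N:ℝ)) ^ 2 = 2 * N * Lm := by field_simp
    calc Real.sqrt (2 * Lm / N) * N
        = Real.sqrt (2 * Lm / N) * Real.sqrt ((N:ℝ) ^ 2) := by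
          rw [Real.sqrt_sq (Nat.cast_nonneg N)]
      _ = Real.sqrt (2 * N * Lm) := by rw [h1, h2]
  have hlvl' : (∑ ξ : Fin N → Bool, D ξ)
      ≤ 2 ^ L * (2 ^ N * Real.sqrt (2 * N * Lm)) := hlvl
  have h2N : ((2:ℝ) ^ N) ≠ 0 := by positivity
  have hNne : ((N:ℝ)) ≠ 0 := ne_of_gt hNpos
  calc ((2:ℝ) ^ N)⁻¹ * ∑ ξ : Fin N → Bool, ((N:ℝ))⁻¹ * D ξ
      = ((2:ℝ) ^ N)⁻¹ * (((N:ℝ))⁻¹ * ∑ ξ : Fin N → Bool, D ξ) := by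
        congr 1
        rw [Finset.mul_sum]
    _ ≤ ((2:ℝ) ^ N)⁻¹ * (((N:ℝ))⁻¹ * (2 ^ L * (2 ^ N * Real.sqrt (2 * N * Lm)))) := by
        refine mul_le_mul_of_nonneg_left ?_ hc
        exact mul_le_mul_of_nonneg_left hlvl' (inv_nonneg.2 hNpos.le)
    _ = 2 ^ L * Real.sqrt (2 * Lm / N) := by
        rw [← hsq]
        field_simp

/-- For every `L ≥ 0` and every sample `S` of `N ≥ 1` points in
`[−1,1]^d`, the class `H^L` given by the closed unit ball of `W^L([−1,1]^d)` satisfies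
`Rad(H^L; S) ≤ 2^L √(2 log(2d+2)/N)`. -/
theorem rademacher_treeSpace_bound {d : ℕ} (L N : ℕ) (hN : 0 < N)
    (S : Fin N → cube d) :
    rademacher {h : cube d → ℝ | ∃ F : C(cube d, ℝ), treeNorm (cube d) L F ≤ 1 ∧ h = ⇑F} S
      ≤ (((2 : ℝ) ^ L * Real.sqrt (2 * Real.log (2 * d + 2) / N) : ℝ) : EReal) :=
  rademacher_treeSpace_bound' L N hN S
end

section
/- Let H be a real Hilbert space, T > 0, let a : [0,T] → H be continuously differentiable, and let R : [0,T] → [0,∞) be differentiable with R′(t) ≤ −‖a′(t)‖²_H for all t ∈ [0,T]. Then for all t ∈ [0,T], ‖a(t)‖_H ≤ ‖a(0)‖_H + √(R(0)) · t^{1/2}. -/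
open MeasureTheory intervalIntegral Set

/-- **Polynomial growth of weight norms under gradient flow.**
Let `H` be a real Hilbert space, `T > 0`, `a : [0,T] → H` continuously differentiable
with derivative `a'`, and `R : [0,T] → [0,∞)` differentiable with derivative `R'`
satisfying the energy dissipation bound `R'(t) ≤ -‖a'(t)‖²`.  Then
`‖a(t)‖ ≤ ‖a(0)‖ + √(R(0)) · t^{1/2}` for all `t ∈ [0,T]`. -/
theorem weight_growth_under_dissipation {H : Type*} [NormedAddCommGroup H]
    [InnerProductSpace ℝ H] [CompleteSpace H]
    (T : ℝ) (hT : 0 < T) (a a' : ℝ → H) (R R' : ℝ → ℝ)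
    (ha : ∀ t ∈ Set.Icc (0 : ℝ) T, HasDerivWithinAt a (a' t) (Set.Icc (0 : ℝ) T) t)
    (ha' : ContinuousOn a' (Set.Icc (0 : ℝ) T))
    (hR : ∀ t ∈ Set.Icc (0 : ℝ) T, HasDerivWithinAt R (R' t) (Set.Icc (0 : ℝ) T) t)
    (hRnn : ∀ t ∈ Set.Icc (0 : ℝ) T, 0 ≤ R t)
    (hdiss : ∀ t ∈ Set.Icc (0 : ℝ) T, R' t ≤ -‖a' t‖ ^ 2) :
    ∀ t ∈ Set.Icc (0 : ℝ) T, ‖a t‖ ≤ ‖a 0‖ + Real.sqrt (R 0) * Real.sqrt t := by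
  intro t ht
  obtain ⟨ht0, htT⟩ := ht
  have hTmem : (0:ℝ) ∈ Set.Icc (0:ℝ) T := ⟨le_rfl, hT.le⟩
  have haC : ContinuousOn a (Set.Icc 0 T) := fun x hx => (ha x hx).continuousWithinAt
  -- the squared-speed function
  set f : ℝ → ℝ := fun s => ‖a' s‖ ^ 2 with hf
  have hfC : ContinuousOn f (Set.Icc 0 T) := (ha'.norm).pow 2
  have hfint : ∀ s ∈ Set.Icc (0:ℝ) T, IntervalIntegrable f volume 0 s := by
    intro s hs
    apply (hfC.mono ?_).intervalIntegrable
    rw [Set.uIcc_of_le hs.1]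
    exact Set.Icc_subset_Icc le_rfl hs.2
  -- primitive of f
  set I : ℝ → ℝ := fun s => ∫ u in (0:ℝ)..s, f u with hI
  -- key energy bound : I t ≤ R 0
  have hIbound : I t ≤ R 0 := by
    have hanti : AntitoneOn (fun s => R s + I s) (Set.Icc 0 T) := by
      apply antitoneOn_of_hasDerivWithinAt_nonpos (convex_Icc 0 T)
        (f' := fun s => R' s + f s)
      · refine ContinuousOn.add (fun x hx => (hR x hx).continuousWithinAt) ?_
        have := intervalIntegral.continuousOn_primitive_interval
          (a := 0) (b := T) (μ := volume) (f := f) ?_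
        · simpa [Set.uIcc_of_le hT.le] using this
        · rw [Set.uIcc_of_le hT.le]
          exact hfC.integrableOn_compact isCompact_Icc
      · intro x hx
        rw [interior_Icc] at hx ⊢
        have hxmem : x ∈ Set.Icc (0:ℝ) T := Set.Ioo_subset_Icc_self hx
        have hnhds : Set.Icc (0:ℝ) T ∈ nhds x := Icc_mem_nhds hx.1 hx.2
        have hRd : HasDerivAt R (R' x) x := (hR x hxmem).hasDerivAt hnhds
        have hfcx : ContinuousAt f x := hfC.continuousAt hnhds
        have hmeasf : StronglyMeasurableAtFilter f (nhds x) volume :=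
          (hfC.mono Set.Ioo_subset_Icc_self).stronglyMeasurableAtFilter isOpen_Ioo x hx
        have hId : HasDerivAt I (f x) x :=
          intervalIntegral.integral_hasDerivAt_right (hfint x hxmem) hmeasf hfcx
        exact ((hRd.add hId).hasDerivWithinAt)
      · intro x hx
        rw [interior_Icc] at hx
        have hxmem : x ∈ Set.Icc (0:ℝ) T := Set.Ioo_subset_Icc_self hx
        have := hdiss x hxmem
        simp only [hf]
        linarith
    have hmono : R t + I t ≤ R 0 + I 0 := hanti hTmem ⟨ht0, htT⟩ ht0
    have hI0 : I 0 = 0 := by simp [hI]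
    have hRt := hRnn t ⟨ht0, htT⟩
    rw [hI0] at hmono
    linarith
  -- FTC for a
  have hsub : Set.Icc (0:ℝ) t ⊆ Set.Icc 0 T := Set.Icc_subset_Icc le_rfl htT
  have haInt : IntervalIntegrable a' volume 0 t := by
    apply (ha'.mono ?_).intervalIntegrable
    rw [Set.uIcc_of_le ht0]; exact hsub
  have hFTC : ∫ s in (0:ℝ)..t, a' s = a t - a 0 := by
    apply intervalIntegral.integral_eq_sub_of_hasDeriv_right_of_le ht0 (haC.mono hsub) ?_ haInt
    intro x hx
    have hxmem : x ∈ Set.Icc (0:ℝ) T := hsub (Set.Ioo_subset_Icc_self hx)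
    have hnhds : Set.Icc (0:ℝ) T ∈ nhdsWithin x (Set.Ioi x) :=
      nhdsWithin_le_nhds (Icc_mem_nhds hx.1 (lt_of_lt_of_le hx.2 htT))
    exact (ha x hxmem).mono_of_mem_nhdsWithin hnhds
  have h1 : ‖a t‖ - ‖a 0‖ ≤ ∫ s in (0:ℝ)..t, ‖a' s‖ := by
    calc ‖a t‖ - ‖a 0‖ ≤ ‖a t - a 0‖ := norm_sub_norm_le _ _
    _ = ‖∫ s in (0:ℝ)..t, a' s‖ := by rw [hFTC]
    _ ≤ ∫ s in (0:ℝ)..t, ‖a' s‖ := intervalIntegral.norm_integral_le_integral_norm ht0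
  -- Hölder / Cauchy–Schwarz
  set μ := volume.restrict (Set.Ioc (0:ℝ) t) with hμ
  have hμfin : IsFiniteMeasure μ := by
    constructor
    rw [hμ, Measure.restrict_apply_univ, Real.volume_Ioc]
    exact ENNReal.ofReal_lt_top
  have hμuniv : (μ Set.univ).toReal = t := by
    rw [hμ, Measure.restrict_apply_univ, Real.volume_Ioc, sub_zero, ENNReal.toReal_ofReal ht0]
  have hmeasg : AEStronglyMeasurable (fun s => ‖a' s‖) μ := by
    exact ((ha'.norm.mono (fun x hx => ⟨le_of_lt hx.1, le_trans hx.2 htT⟩)).aestronglyMeasurable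
      measurableSet_Ioc)
  have hbdd : ∃ C, ∀ x ∈ Set.Icc (0:ℝ) T, ‖a' x‖ ≤ C := by
    obtain ⟨C, hC⟩ := isCompact_Icc.exists_bound_of_continuousOn ha'
    exact ⟨C, hC⟩
  obtain ⟨C, hC⟩ := hbdd
  have hmem : MemLp (fun s => ‖a' s‖) (ENNReal.ofReal 2) μ := by
    apply MemLp.of_bound hmeasg C
    rw [hμ]
    filter_upwards [ae_restrict_mem measurableSet_Ioc] with x hx
    rw [Real.norm_eq_abs, abs_of_nonneg (norm_nonneg _)]
    exact hC x ⟨le_of_lt hx.1, le_trans hx.2 htT⟩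
  have hmem1 : MemLp (fun _ : ℝ => (1:ℝ)) (ENNReal.ofReal 2) μ := memLp_const 1
  have hconj : Real.HolderConjugate 2 2 := Real.HolderConjugate.two_two
  have hholder := MeasureTheory.integral_mul_le_Lp_mul_Lq_of_nonneg hconj
    (f := fun s => ‖a' s‖) (g := fun _ => (1:ℝ)) (μ := μ)
    (Filter.Eventually.of_forall fun x => norm_nonneg _)
    (Filter.Eventually.of_forall fun _ => zero_le_one) hmem hmem1
  simp only [mul_one, Real.one_rpow] at hholder
  have hg2 : (∫ _ : ℝ, (1:ℝ) ∂μ) = t := by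
    rw [MeasureTheory.integral_const, Measure.real, hμuniv, smul_eq_mul, mul_one]
  have hf2 : (∫ s, ‖a' s‖ ^ (2:ℝ) ∂μ) = I t := by
    have : I t = ∫ u in Set.Ioc (0:ℝ) t, f u := by
      rw [hI]
      exact intervalIntegral.integral_of_le ht0
    rw [this]
    apply MeasureTheory.integral_congr_ae
    filter_upwards with x
    rw [hf, show ((2:ℝ)) = ((2:ℕ):ℝ) by norm_num, Real.rpow_natCast]
  rw [hg2, hf2] at hholder
  have h2 : (∫ s in (0:ℝ)..t, ‖a' s‖) ≤ I t ^ (1/(2:ℝ)) * t ^ (1/(2:ℝ)) := by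
    rw [intervalIntegral.integral_of_le ht0]
    exact hholder
  have hInn : 0 ≤ I t := by
    rw [hI]
    apply intervalIntegral.integral_nonneg ht0
    intro u _
    positivity
  have h3 : I t ^ (1/(2:ℝ)) ≤ Real.sqrt (R 0) := by
    rw [← Real.sqrt_eq_rpow]
    exact Real.sqrt_le_sqrt hIbound
  have h4 : t ^ (1/(2:ℝ)) = Real.sqrt t := (Real.sqrt_eq_rpow t).symm
  have htpow : 0 ≤ t ^ (1/(2:ℝ)) := by rw [h4]; exact Real.sqrt_nonneg t
  have : ‖a t‖ - ‖a 0‖ ≤ Real.sqrt (R 0) * Real.sqrt t := by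
    calc ‖a t‖ - ‖a 0‖ ≤ ∫ s in (0:ℝ)..t, ‖a' s‖ := h1
    _ ≤ I t ^ (1/(2:ℝ)) * t ^ (1/(2:ℝ)) := h2
    _ ≤ Real.sqrt (R 0) * Real.sqrt t := by
        rw [h4]
        exact mul_le_mul_of_nonneg_right h3 (Real.sqrt_nonneg t)
  linarith
end
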